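/- For the planar undelayed system S' = μ(1−S) − β(g(I))IS, I' = β(g(I))IS − (μ+ν)I on the region {S > 0, I > 0}, the Dulac function B(S,I) = 1/I gives div(B·(S',I')) = −μ/I − β(g(I)) + S g'(I) β'(g(I)) (evaluated pointwise), which is strictly negative whenever β > 0, β' < 0, g' > 0, S > 0, I > 0; hence by the Bendixson–Dulac criterion the system has no periodic orbits in the open first quadrant. -/

import Mathlib

/-- For the planar undelayed system, the Dulac function `B = 1/I`
gives divergence `−μ/I − β(g I) + S g'(I) β'(g I) < 0` on `{S > 0, I > 0}`,
hence (Bendixson–Dulac) the system has no nonconstant periodic orbits in the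
open first quadrant. -/
theorem dulac_no_periodic_orbits
    (μ ν : ℝ) (hμ : 0 < μ) (hν : 0 < ν)
    (β g : ℝ → ℝ)
    (hβC1 : ContDiff ℝ 1 β) (hgC1 : ContDiff ℝ 1 g)
    (hβpos : ∀ m, 0 < β m) (hβ' : ∀ m, deriv β m < 0)
    (hg' : ∀ i, 0 < deriv g i) :
    (∀ S I : ℝ, 0 < S → 0 < I →
      deriv (fun s => (μ * (1 - s) - β (g I) * I * s) / I) S +
        deriv (fun i => β (g i) * S - (μ + ν)) I =
        -μ / I - β (g I) + S * deriv g I * deriv β (g I) ∧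
      -μ / I - β (g I) + S * deriv g I * deriv β (g I) < 0) ∧
    (∀ (S I : ℝ → ℝ) (T : ℝ), 0 < T →
      (∀ t, 0 < S t) → (∀ t, 0 < I t) →
      (∀ t, HasDerivAt S (μ * (1 - S t) - β (g (I t)) * I t * S t) t) →
      (∀ t, HasDerivAt I (β (g (I t)) * I t * S t - (μ + ν) * I t) t) →
      (∀ t, S (t + T) = S t) → (∀ t, I (t + T) = I t) →
      (∀ t t' : ℝ, S t = S t' ∧ I t = I t')) := by
  have hβd : Differentiable ℝ β := hβC1.differentiable one_ne_zero
  have hgd : Differentiable ℝ g := hgC1.differentiable one_ne_zero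
  constructor
  · -- Part 1: the divergence computation and its negativity
    intro S I hS hI
    have hd1 : HasDerivAt (fun s => (μ * (1 - s) - β (g I) * I * s) / I)
        ((-μ - β (g I) * I) / I) S := by
      have h1 : HasDerivAt (fun s : ℝ => μ * (1 - s) - β (g I) * I * s)
          (-μ - β (g I) * I) S := by
        have ha : HasDerivAt (fun s : ℝ => μ * (1 - s)) (μ * (-1)) S :=
          ((hasDerivAt_id S).const_sub 1).const_mul μ
        have hb : HasDerivAt (fun s : ℝ => β (g I) * I * s) (β (g I) * I * 1) S :=
          (hasDerivAt_id S).const_mul (β (g I) * I)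
        have := ha.sub hb
        rw [show (-μ - β (g I) * I) = μ * (-1) - β (g I) * I * 1 by ring]
        exact this
      exact h1.div_const I
    have hd2 : HasDerivAt (fun i => β (g i) * S - (μ + ν))
        (deriv β (g I) * deriv g I * S) I := by
      have hc : HasDerivAt (fun i => β (g i)) (deriv β (g I) * deriv g I) I :=
        ((hβd (g I)).hasDerivAt).comp I ((hgd I).hasDerivAt)
      exact (hc.mul_const S).sub_const (μ + ν)
    constructor
    · rw [hd1.deriv, hd2.deriv]
      field_simp
    · have h1 : (0:ℝ) < μ / I := div_pos hμ hI
      have h2 : (0:ℝ) < β (g I) := hβpos (g I)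
      have h3 : S * deriv g I * deriv β (g I) < 0 :=
        mul_neg_of_pos_of_neg (mul_pos hS (hg' I)) (hβ' (g I))
      rw [neg_div]
      linarith
  · -- Part 2: no nonconstant periodic orbits
    intro S I T hT hSpos hIpos hS hI hSper hIper
    have hIne : ∀ t, I t ≠ 0 := fun t => (hIpos t).ne'
    set v : ℝ → ℝ := fun t => β (g (I t)) * S t - (μ + ν) with hv_def
    set a : ℝ → ℝ := fun t =>
      deriv β (g (I t)) * deriv g (I t) * I t * S t - μ - I t * β (g (I t)) with ha_def
    set Bf : ℝ → ℝ := fun x =>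
      β (g (Real.exp x)) * (μ - (μ + ν) * Real.exp x) - μ * (μ + ν) with hBf_def
    set z : ℝ → ℝ := fun t => Real.log (I t) with hz_def
    -- derivative of I rewritten
    have hIder : ∀ t, HasDerivAt I (I t * v t) t := by
      intro t
      convert hI t using 1
      simp only [hv_def]
      ring
    -- derivative of z = log I
    have hz : ∀ t, HasDerivAt z (v t) t := by
      intro t
      have h := (hI t).log (hIne t)
      convert h using 1
      simp only [hv_def]
      rw [eq_div_iff (hIne t)]
      ring
    -- derivative of v
    have hvder : ∀ t, HasDerivAt v (a t * v t + Bf (z t)) t := by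
      intro t
      have hc : HasDerivAt (fun t => β (g (I t)))
          (deriv β (g (I t)) * (deriv g (I t) * (I t * v t))) t :=
        ((hβd (g (I t))).hasDerivAt).comp t
          (((hgd (I t)).hasDerivAt).comp t (hIder t))
      have h2 := (hc.mul (hS t)).sub_const (μ + ν)
      have hgoal : HasDerivAt v
          (deriv β (g (I t)) * (deriv g (I t) * (I t * v t)) * S t +
            β (g (I t)) * (μ * (1 - S t) - β (g (I t)) * I t * S t)) t := h2
      convert hgoal using 1
      have he : Real.exp (z t) = I t := Real.exp_log (hIpos t)
      simp only [ha_def, hBf_def, hz_def, hv_def, Real.exp_log (hIpos t)]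
      ring
    -- antiderivative of Bf
    have hBfc : Continuous Bf := by
      have hb := hβC1.continuous
      have hg := hgC1.continuous
      simp only [hBf_def]
      fun_prop
    set G : ℝ → ℝ := fun x => ∫ u in (0:ℝ)..x, Bf u with hG_def
    have hG : ∀ x, HasDerivAt G (Bf x) x := fun x =>
      intervalIntegral.integral_hasDerivAt_right (hBfc.intervalIntegrable 0 x)
        (hBfc.stronglyMeasurableAtFilter _ _) hBfc.continuousAt
    -- energy function
    set E : ℝ → ℝ := fun t => v t ^ 2 / 2 - G (z t) with hE_def
    have hE : ∀ t, HasDerivAt E (a t * v t ^ 2) t := by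
      intro t
      have h1 : HasDerivAt (fun t => v t ^ 2 / 2)
          ((2 * v t ^ 1 * (a t * v t + Bf (z t))) / 2) t :=
        ((hvder t).pow 2).div_const 2
      have h2 : HasDerivAt (fun t => G (z t)) (Bf (z t) * v t) t :=
        (hG (z t)).comp t (hz t)
      have h3 := h1.sub h2
      rw [show a t * v t ^ 2 = 2 * v t ^ 1 * (a t * v t + Bf (z t)) / 2 - Bf (z t) * v t by ring]
      exact h3
    have hapos : ∀ t, a t < 0 := by
      intro t
      have h1 : deriv β (g (I t)) * deriv g (I t) * I t * S t < 0 :=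
        mul_neg_of_neg_of_pos
          (mul_neg_of_neg_of_pos
            (mul_neg_of_neg_of_pos (hβ' (g (I t))) (hg' (I t))) (hIpos t)) (hSpos t)
      have h2 : 0 < I t * β (g (I t)) := mul_pos (hIpos t) (hβpos (g (I t)))
      simp only [ha_def]
      linarith
    have hEanti : Antitone E := by
      apply antitone_of_deriv_nonpos
      · exact fun t => (hE t).differentiableAt
      · intro t
        rw [(hE t).deriv]
        exact mul_nonpos_of_nonpos_of_nonneg (hapos t).le (sq_nonneg _)
    have hEper : ∀ t, E (t + T) = E t := by
      intro t
      simp only [hE_def, hv_def, hz_def, hSper, hIper]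
    have hEn : ∀ (n : ℕ) (t : ℝ), E (t + n * T) = E t := by
      intro n
      induction n with
      | zero => intro t; simp
      | succ n ih =>
        intro t
        have : t + ((n : ℝ) + 1) * T = (t + T) + n * T := by ring
        push_cast
        rw [this, ih, hEper]
    have hEconst : ∀ s t : ℝ, E s = E t := by
      suffices h : ∀ s t : ℝ, s ≤ t → E s = E t by
        intro s t
        rcases le_total s t with h' | h'
        · exact h s t h'
        · exact (h t s h').symm
      intro s t hst
      obtain ⟨n, hn⟩ := exists_nat_ge ((t - s) / T)
      have hnT : t ≤ s + n * T := by
        have := (div_le_iff₀ hT).mp hn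
        linarith
      refine le_antisymm ?_ (hEanti hst)
      calc E s = E (s + n * T) := (hEn n s).symm
        _ ≤ E t := hEanti hnT
    have hv0 : ∀ t, v t = 0 := by
      intro t
      have hEf : E = fun _ => E 0 := funext fun x => hEconst x 0
      have h0 : HasDerivAt E 0 t := by
        rw [hEf]; exact hasDerivAt_const _ _
      have huniq : a t * v t ^ 2 = 0 := (hE t).unique h0
      have hvsq : v t ^ 2 = 0 := by
        rcases mul_eq_zero.mp huniq with h | h
        · exact absurd h (hapos t).ne
        · exact h
      exact pow_eq_zero_iff (by norm_num) |>.mp hvsq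
    have hIconst : ∀ t t' : ℝ, I t = I t' := by
      intro t t'
      apply is_const_of_deriv_eq_zero
      · exact fun x => (hI x).differentiableAt
      · intro x
        rw [(hI x).deriv]
        have h := hv0 x
        simp only [hv_def] at h
        linear_combination I x * h
    intro t t'
    refine ⟨?_, hIconst t t'⟩
    have h1 : β (g (I t)) * S t = μ + ν := by
      have h := hv0 t
      simp only [hv_def] at h
      linarith
    have h2 : β (g (I t')) * S t' = μ + ν := by
      have h := hv0 t'
      simp only [hv_def] at h
      linarith
    rw [hIconst t t'] at h1
    exact mul_left_cancel₀ (hβpos (g (I t'))).ne' (h1.trans h2.symm)
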